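/- Let M be a complex manifold with vanishing Dolbeault cohomology H^{p,q}_{∂̄}(M) = 0 for all q ≥ 1. If a d-closed (3,0)-form ω is exact as a smooth 3-form, ω = dα, then ω = dα^{(2,0)} for some (2,0)-form α^{(2,0)}; i.e., the natural map from {d-closed (3,0)-forms}/d(Ω^{2,0}) to the third de Rham cohomology H³_dR(M;ℂ) is injective. -/
import Mathlib


/-- Injectivity of `{d-closed (3,0)-forms}/d(Ω^{2,0}) → H³_dR` on a complex manifold
with vanishing positive-degree Dolbeault cohomology: if a d-closed (3,0)-form `ω` is
d-exact, `ω = d(α^{(2,0)} + α^{(1,1)} + α^{(0,2)})` (encoded by the bidegree components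
of the equation), then `ω = dα'` for some (2,0)-form `α'` (i.e. `∂α' = ω`, `∂̄α' = 0`). -/
theorem stmt_17 (Ω01 Ω10 Ω02 Ω11 Ω20 Ω03 Ω12 Ω21 Ω30 Ω31 : Type*)
    [AddCommGroup Ω01] [Module ℂ Ω01] [AddCommGroup Ω10] [Module ℂ Ω10]
    [AddCommGroup Ω02] [Module ℂ Ω02] [AddCommGroup Ω11] [Module ℂ Ω11]
    [AddCommGroup Ω20] [Module ℂ Ω20] [AddCommGroup Ω03] [Module ℂ Ω03]
    [AddCommGroup Ω12] [Module ℂ Ω12] [AddCommGroup Ω21] [Module ℂ Ω21]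
    [AddCommGroup Ω30] [Module ℂ Ω30] [AddCommGroup Ω31] [Module ℂ Ω31]
    (pd01 : Ω01 →ₗ[ℂ] Ω11) (pd10 : Ω10 →ₗ[ℂ] Ω20) (pd02 : Ω02 →ₗ[ℂ] Ω12)
    (pd11 : Ω11 →ₗ[ℂ] Ω21) (pd20 : Ω20 →ₗ[ℂ] Ω30)
    (db01 : Ω01 →ₗ[ℂ] Ω02) (db10 : Ω10 →ₗ[ℂ] Ω11) (db02 : Ω02 →ₗ[ℂ] Ω03)
    (db11 : Ω11 →ₗ[ℂ] Ω12) (db20 : Ω20 →ₗ[ℂ] Ω21) (db30 : Ω30 →ₗ[ℂ] Ω31)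
    -- structural identities `∂² = 0` and `∂∂̄ + ∂̄∂ = 0`
    (hdd10 : ∀ x : Ω10, pd20 (pd10 x) = 0)
    (hdd01 : ∀ x : Ω01, pd11 (pd01 x) = 0)
    (hanti01 : ∀ x : Ω01, db11 (pd01 x) + pd02 (db01 x) = 0)
    (hanti10 : ∀ x : Ω10, db20 (pd10 x) + pd11 (db10 x) = 0)
    -- vanishing of Dolbeault cohomology in positive ∂̄-degree
    (hex02 : ∀ b : Ω02, db02 b = 0 → ∃ g : Ω01, db01 g = b)
    (hex11 : ∀ b : Ω11, db11 b = 0 → ∃ g : Ω10, db10 g = b)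
    -- a d-closed (3,0)-form ω which is d-exact: ω = dα with α = α20 + α11 + α02
    (ω : Ω30) (hω : db30 ω = 0)
    (α20 : Ω20) (α11 : Ω11) (α02 : Ω02)
    (h30 : pd20 α20 = ω)
    (h21 : db20 α20 + pd11 α11 = 0)
    (h12 : db11 α11 + pd02 α02 = 0)
    (h03 : db02 α02 = 0) :
    ∃ α' : Ω20, pd20 α' = ω ∧ db20 α' = 0 := by
  obtain ⟨γ, hγ⟩ := hex02 α02 h03
  have h11 : db11 (α11 - pd01 γ) = 0 := by
    have hwa := hanti01 γ
    rw [hγ] at hwa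
    have e1 : db11 α11 = -pd02 α02 := eq_neg_of_add_eq_zero_left h12
    have e2 : db11 (pd01 γ) = -pd02 α02 := eq_neg_of_add_eq_zero_left hwa
    rw [map_sub, e1, e2, sub_self]
  obtain ⟨g, hg⟩ := hex11 (α11 - pd01 γ) h11
  refine ⟨α20 - pd10 g, ?_, ?_⟩
  · rw [map_sub, hdd10 g, sub_zero, h30]
  · have h1 := hanti10 g
    rw [hg, map_sub, hdd01 γ, sub_zero] at h1
    have e3 : db20 α20 = -pd11 α11 := eq_neg_of_add_eq_zero_left h21
    have e4 : db20 (pd10 g) = -pd11 α11 := eq_neg_of_add_eq_zero_left h1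
    rw [map_sub, e3, e4, sub_self]
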